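/- Monotonicity of relative entropy under partial trace in finite dimensions: for density matrices ρ, σ on H_A ⊗ H_B, D(Tr_B ρ ‖ Tr_B σ) ≤ D(ρ ‖ σ). -/

import Mathlib

open Matrix Kronecker ComplexOrder

/-- Matrix logarithm via the continuous functional calculus (acting on the eigenvalues of a
Hermitian matrix). -/
noncomputable def matLog {n : Type*} [Fintype n] [DecidableEq n] (A : Matrix n n ℂ) :
    Matrix n n ℂ :=
  cfc Real.log A

/-- Lindblad's extension of the quantum relative entropy:
`D(A‖B) = Tr[A (log A − log B)] + Tr B − Tr A`. -/
noncomputable def relEnt {n : Type*} [Fintype n] [DecidableEq n] (A B : Matrix n n ℂ) : ℝ :=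
  ((A * (matLog A - matLog B)).trace + B.trace - A.trace).re

/-- Von Neumann entropy `S(ρ) = −Tr[ρ log ρ]`. -/
noncomputable def vnEntropy {n : Type*} [Fintype n] [DecidableEq n] (A : Matrix n n ℂ) : ℝ :=
  -((A * matLog A).trace.re)

/-- Support containment `supp A ⊆ supp B`, expressed via kernels (for positive semidefinite
matrices, `supp A ⊆ supp B` is equivalent to `ker B ⊆ ker A`). -/
def suppLE {n : Type*} [Fintype n] [DecidableEq n] (A B : Matrix n n ℂ) : Prop :=
  ∀ v : n → ℂ, B.mulVec v = 0 → A.mulVec v = 0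

/-- Partial trace over the second tensor factor. -/
noncomputable def ptraceB {a b : Type*} [Fintype a] [Fintype b]
    (ρ : Matrix (a × b) (a × b) ℂ) : Matrix a a ℂ :=
  Matrix.of fun i j => ∑ k : b, ρ (i, k) (j, k)

/-- Partial trace over the first tensor factor. -/
noncomputable def ptraceA {a b : Type*} [Fintype a] [Fintype b]
    (ρ : Matrix (a × b) (a × b) ℂ) : Matrix b b ℂ :=
  Matrix.of fun i j => ∑ k : a, ρ (k, i) (k, j)

/-- The quantum relative entropy with the support convention
(`D(ρ‖σ) = +∞` unless `supp ρ ⊆ supp σ`), with values in the extended reals. -/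
noncomputable def relEntE {n : Type*} [Fintype n] [DecidableEq n]
    (ρ σ : Matrix n n ℂ) : EReal :=
  open scoped Classical in
  if suppLE ρ σ then ((relEnt ρ σ : ℝ) : EReal) else ⊤


/-! ### Auxiliary machinery for the proof -/

open MeasureTheory Set Filter

section scalar
/-- FTC: the scalar integral representation of `log ν - log μ`. -/
lemma scalar_hasDerivAt (μ ν : ℝ) (hμ : 0 < μ) (hν : 0 < ν) {s : ℝ} (hs : 0 ≤ s) :
    HasDerivAt (fun s : ℝ => Real.log (μ + s * ν) - Real.log (1 + s))
      (ν / (μ + s * ν) - 1 / (1 + s)) s := by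
  have h1 : 0 < μ + s * ν := by positivity
  have h2 : 0 < 1 + s := by linarith
  have d1 : HasDerivAt (fun s : ℝ => μ + s * ν) ν s := by
    simpa using (hasDerivAt_id s).mul_const ν |>.const_add μ
  have d2 : HasDerivAt (fun s : ℝ => 1 + s) 1 s := by
    simpa using (hasDerivAt_id s).const_add 1
  have l1 := (Real.hasDerivAt_log h1.ne').comp s d1
  have l2 := (Real.hasDerivAt_log h2.ne').comp s d2
  simpa [div_eq_mul_inv, mul_comm, Pi.sub_def, Function.comp_def] using l1.sub l2

lemma scalar_integrable (μ ν : ℝ) (hμ : 0 < μ) (hν : 0 < ν) :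
    IntegrableOn (fun s : ℝ => ν / (μ + s * ν) - 1 / (1 + s)) (Ioi 0) := by
  set m := min μ ν with hm
  have hm0 : 0 < m := lt_min hμ hν
  have hcont : ContinuousOn (fun s : ℝ => ν / (μ + s * ν) - 1 / (1 + s)) (Ioi 0) := by
    apply ContinuousOn.sub
    · exact continuousOn_const.div (by fun_prop) (fun s hs => by have : (0:ℝ) < s := hs; positivity)
    · exact continuousOn_const.div (by fun_prop) (fun s hs => by have : (0:ℝ) < s := hs; positivity)
  refine Integrable.mono' (g := fun s => (|ν - μ| / m) * (1 + s ^ 2)⁻¹)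
    ((integrable_inv_one_add_sq.const_mul _).integrableOn) (hcont.aestronglyMeasurable measurableSet_Ioi) ?_
  filter_upwards [ae_restrict_mem measurableSet_Ioi] with s hs
  have hs' : (0:ℝ) < s := hs
  have h1 : 0 < μ + s * ν := by positivity
  have h2 : 0 < 1 + s := by linarith
  have key : ν / (μ + s * ν) - 1 / (1 + s) = (ν - μ) / ((μ + s * ν) * (1 + s)) := by
    field_simp; ring
  rw [key, norm_div]
  have hden : m * (1 + s ^ 2) ≤ (μ + s * ν) * (1 + s) := by
    have h3 : m ≤ μ := min_le_left _ _
    have h4 : m ≤ ν := min_le_right _ _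
    nlinarith
  have hden0 : 0 < m * (1 + s ^ 2) := by positivity
  rw [Real.norm_eq_abs, Real.norm_eq_abs, abs_of_pos (by positivity : (0:ℝ) < (μ + s*ν)*(1+s))]
  rw [div_le_iff₀ (by positivity)]
  calc |ν - μ| = (|ν - μ| / m * (1 + s ^ 2)⁻¹) * (m * (1+s^2)) := by
        field_simp
    _ ≤ (|ν - μ| / m * (1 + s ^ 2)⁻¹) * ((μ + s * ν) * (1 + s)) := by
        apply mul_le_mul_of_nonneg_left hden (by positivity)

lemma scalar_integral (μ ν : ℝ) (hμ : 0 < μ) (hν : 0 < ν) :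
    ∫ s in Ioi (0:ℝ), (ν / (μ + s * ν) - 1 / (1 + s)) = Real.log ν - Real.log μ := by
  have htend : Tendsto (fun s : ℝ => Real.log (μ + s * ν) - Real.log (1 + s)) atTop
      (nhds (Real.log ν)) := by
    have h1 : Tendsto (fun s : ℝ => (μ + s * ν) / (1 + s)) atTop (nhds ν) := by
      have : (fun s : ℝ => (μ + s * ν) / (1 + s)) =ᶠ[atTop]
          (fun s : ℝ => (μ * s⁻¹ + ν) / (s⁻¹ + 1)) := by
        filter_upwards [eventually_gt_atTop (0:ℝ)] with s hs
        have hs0 : s ≠ 0 := ne_of_gt hs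
        rw [div_eq_div_iff (by positivity) (by positivity)]
        field_simp
      rw [tendsto_congr' this]
      have := Filter.Tendsto.div ((tendsto_inv_atTop_zero.const_mul μ).add
        (tendsto_const_nhds (x := ν))) ((tendsto_inv_atTop_zero).add
        (tendsto_const_nhds (x := (1:ℝ)))) (by norm_num)
      simpa [Pi.div_def] using this
    have h2 : Tendsto (fun s : ℝ => Real.log ((μ + s * ν) / (1 + s))) atTop
        (nhds (Real.log ν)) := (Real.continuousAt_log hν.ne').tendsto.comp h1
    refine h2.congr' ?_
    filter_upwards [eventually_gt_atTop (0:ℝ)] with s hs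
    rw [Real.log_div (by positivity) (by positivity)]
  have := integral_Ioi_of_hasDerivAt_of_tendsto' (a := 0)
    (f := fun s : ℝ => Real.log (μ + s * ν) - Real.log (1 + s))
    (fun x hx => scalar_hasDerivAt μ ν hμ hν hx.out) (scalar_integrable μ ν hμ hν) htend
  simpa using this
end scalar

section matrixhelpers
variable {n : Type*} [Fintype n] [DecidableEq n]

/-- trace of `Zᴴ * W * diagonal d`. -/
lemma traceE1 (Z W : Matrix n n ℂ) (d : n → ℂ) :
    (star Z * W * diagonal d).trace = ∑ k, ∑ l, star (Z k l) * W k l * d l := by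
  simp only [Matrix.trace, Matrix.diag_apply, Matrix.mul_apply, Matrix.diagonal_apply,
    Matrix.conjTranspose_apply, Matrix.star_apply, Finset.sum_mul, ite_mul, zero_mul,
    mul_ite, mul_zero, Finset.sum_ite_eq, Finset.sum_ite_eq', Finset.mem_univ, if_true]
  rw [Finset.sum_comm]

/-- trace of `Zᴴ * diagonal d * Z`. -/
lemma traceE2 (Z : Matrix n n ℂ) (d : n → ℂ) :
    (star Z * diagonal d * Z).trace = ∑ k, ∑ l, star (Z k l) * Z k l * d k := by
  simp only [Matrix.trace, Matrix.diag_apply, Matrix.mul_apply, Matrix.mul_diagonal,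
    Matrix.conjTranspose_apply, Matrix.star_apply, Finset.sum_mul, Matrix.diagonal_apply,
    ite_mul, zero_mul, mul_ite, mul_zero, Finset.sum_ite_eq, Finset.sum_ite_eq',
    Finset.mem_univ, if_true]
  rw [Finset.sum_comm]
  apply Finset.sum_congr rfl; intro k _
  apply Finset.sum_congr rfl; intro l _
  ring

/-- trace of `diagonal d * W * diagonal e * star W`. -/
lemma traceE4 (W : Matrix n n ℂ) (d e : n → ℂ) :
    (diagonal d * W * diagonal e * star W).trace
      = ∑ l, ∑ k, d l * e k * (W l k * star (W l k)) := by
  simp only [Matrix.trace, Matrix.diag_apply, Matrix.mul_apply, Matrix.mul_diagonal,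
    Matrix.conjTranspose_apply, Matrix.star_apply, Finset.sum_mul, Finset.mul_sum,
    Matrix.diagonal_apply, ite_mul, zero_mul, mul_ite, mul_zero, Finset.sum_ite_eq,
    Finset.sum_ite_eq', Finset.mem_univ, if_true]
  apply Finset.sum_congr rfl; intro l _
  apply Finset.sum_congr rfl; intro k _
  ring

lemma cancel_left {V : Matrix n n ℂ} (hV : star V * V = 1) (A : Matrix n n ℂ) :
    star V * (V * A) = A := by rw [← Matrix.mul_assoc, hV, Matrix.one_mul]

lemma sandwich_eq {U V : Matrix n n ℂ} (hU : U * star U = 1) (hV : V * star V = 1)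
    (Y : Matrix n n ℂ) : U * (star U * Y * V) * star V = Y := by
  calc U * (star U * Y * V) * star V = (U * star U) * Y * (V * star V) := by
        simp only [Matrix.mul_assoc]
    _ = Y := by rw [hU, hV, Matrix.one_mul, Matrix.mul_one]

/-- key identity (i): `Tr[Yᴴ ρ]` in coordinates, `Y = U Z Vᴴ`, `ρ = V D Vᴴ`. -/
lemma key1 (U V Z : Matrix n n ℂ) (hV : star V * V = 1) (d : n → ℂ) :
    (star (U * Z * star V) * (V * diagonal d * star V)).trace
      = ∑ k, ∑ l, star (Z k l) * (star U * V) k l * d l := by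
  have h : star (U * Z * star V) * (V * diagonal d * star V)
      = V * (star Z * (star U * V) * diagonal d * star V) := by
    simp only [Matrix.star_mul, star_star, Matrix.mul_assoc]
  rw [h, Matrix.trace_mul_comm]
  have h2 : star Z * (star U * V) * diagonal d * star V * V
      = star Z * (star U * V) * diagonal d := by
    simp only [Matrix.mul_assoc, hV, Matrix.mul_one]
  rw [h2, traceE1]

/-- key identity (ii): `Tr[Yᴴ σ Y]` in coordinates. -/
lemma key2 (U V Z : Matrix n n ℂ) (hU : star U * U = 1) (hV : star V * V = 1) (d : n → ℂ) :
    (star (U * Z * star V) * (U * diagonal d * star U) * (U * Z * star V)).trace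
      = ∑ k, ∑ l, star (Z k l) * Z k l * d k := by
  have h : star (U * Z * star V) * (U * diagonal d * star U) * (U * Z * star V)
      = V * (star Z * diagonal d * Z * star V) := by
    simp only [Matrix.star_mul, star_star, Matrix.mul_assoc, cancel_left hU, cancel_left hV]
  rw [h, Matrix.trace_mul_comm]
  have h2 : star Z * diagonal d * Z * star V * V = star Z * diagonal d * Z := by
    simp only [Matrix.mul_assoc, hV, Matrix.mul_one]
  rw [h2, traceE2]

/-- key identity (iii): `Tr[Yᴴ Y ρ]` in coordinates. -/
lemma key3 (U V Z : Matrix n n ℂ) (hU : star U * U = 1) (hV : star V * V = 1) (d : n → ℂ) :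
    (star (U * Z * star V) * (U * Z * star V) * (V * diagonal d * star V)).trace
      = ∑ k, ∑ l, star (Z k l) * Z k l * d l := by
  have h : star (U * Z * star V) * (U * Z * star V) * (V * diagonal d * star V)
      = V * (star Z * Z * diagonal d * star V) := by
    simp only [Matrix.star_mul, star_star, Matrix.mul_assoc, cancel_left hU, cancel_left hV]
  rw [h, Matrix.trace_mul_comm]
  have h2 : star Z * Z * diagonal d * star V * V = star Z * Z * diagonal d := by
    simp only [Matrix.mul_assoc, hV, Matrix.mul_one]
  rw [h2, traceE1]

end matrixhelpers

noncomputable def qF {n : Type*} [Fintype n] [DecidableEq n]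
    (s : ℝ) (R S Y : Matrix n n ℂ) : ℝ :=
  2 * ((star Y * R).trace).re - ((star Y * S * Y).trace).re - s * ((star Y * Y * R).trace).re

section ptrace
variable {a b : Type*} [Fintype a] [DecidableEq a] [Fintype b] [DecidableEq b]
variable (ρ σ : Matrix (a × b) (a × b) ℂ)

/-- the embedding `v ↦ v ⊗ e_k`. -/
def embV (v : a → ℂ) (k : b) : a × b → ℂ := fun p => if p.2 = k then v p.1 else 0

lemma ptraceB_trace : (ptraceB ρ).trace = ρ.trace := by
  simp only [Matrix.trace, Matrix.diag_apply, ptraceB, Matrix.of_apply, Fintype.sum_prod_type]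

lemma ptraceB_isHermitian (h : ρ.IsHermitian) : (ptraceB ρ).IsHermitian := by
  ext i j
  simp only [Matrix.conjTranspose_apply, ptraceB, Matrix.of_apply, Matrix.star_apply, star_sum]
  refine Finset.sum_congr rfl fun k _ => ?_
  conv_rhs => rw [← h]
  rw [Matrix.conjTranspose_apply]

lemma quad_ptraceB (v : a → ℂ) :
    star v ⬝ᵥ (ptraceB ρ) *ᵥ v = ∑ k : b, star (embV v k) ⬝ᵥ ρ *ᵥ (embV v k) := by
  have haveR : ∀ k : b, star (embV v k) ⬝ᵥ ρ *ᵥ (embV v k)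
      = ∑ i : a, ∑ j : a, star (v i) * ρ (i,k) (j,k) * v j := by
    intro k
    simp only [dotProduct, Matrix.mulVec, embV, Pi.star_apply,
      apply_ite (star : ℂ → ℂ), star_zero, ite_mul, zero_mul, mul_ite, mul_zero,
      Fintype.sum_prod_type, Finset.sum_ite_eq, Finset.sum_ite_eq', Finset.mem_univ, if_true]
    refine Finset.sum_congr rfl fun i _ => ?_
    rw [Finset.mul_sum]
    refine Finset.sum_congr rfl fun j _ => ?_
    ring
  have haveL : star v ⬝ᵥ (ptraceB ρ) *ᵥ v
      = ∑ i : a, ∑ j : a, ∑ k : b, star (v i) * ρ (i,k) (j,k) * v j := by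
    simp only [dotProduct, Matrix.mulVec, ptraceB, Matrix.of_apply, Pi.star_apply,
      Finset.mul_sum, Finset.sum_mul]
    refine Finset.sum_congr rfl fun i _ => ?_
    refine Finset.sum_congr rfl fun j _ => ?_
    refine Finset.sum_congr rfl fun k _ => ?_
    ring
  rw [haveL, Finset.sum_congr rfl fun k (_ : k ∈ Finset.univ) => haveR k]
  calc (∑ i : a, ∑ j : a, ∑ k : b, star (v i) * ρ (i,k) (j,k) * v j)
      = ∑ i : a, ∑ k : b, ∑ j : a, star (v i) * ρ (i,k) (j,k) * v j :=
        Finset.sum_congr rfl fun i _ => Finset.sum_comm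
    _ = ∑ k : b, ∑ i : a, ∑ j : a, star (v i) * ρ (i,k) (j,k) * v j := Finset.sum_comm

lemma mulVec_embV (k : b) (v : a → ℂ) (i : a) :
    (ρ *ᵥ (embV v k)) (i, k) = ∑ j : a, ρ (i,k) (j,k) * v j := by
  simp only [Matrix.mulVec, dotProduct, embV, Fintype.sum_prod_type,
    mul_ite, mul_zero, Finset.sum_ite_eq, Finset.sum_ite_eq', Finset.mem_univ, if_true]

lemma posSemidef_ptraceB (h : ρ.PosSemidef) : (ptraceB ρ).PosSemidef := by
  refine PosSemidef.of_dotProduct_mulVec_nonneg (ptraceB_isHermitian ρ h.1) fun v => ?_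
  rw [quad_ptraceB]
  exact Finset.sum_nonneg fun k _ => h.dotProduct_mulVec_nonneg _

lemma suppLE_ptraceB (hσ : σ.PosSemidef) (h : suppLE ρ σ) :
    suppLE (ptraceB ρ) (ptraceB σ) := by
  intro v hv
  have hq : ∀ k : b, σ *ᵥ (embV v k) = 0 := by
    have h0 : ∑ k : b, star (embV v k) ⬝ᵥ σ *ᵥ (embV v k) = 0 := by
      rw [← quad_ptraceB, hv, dotProduct_zero]
    intro k
    rw [← (hσ.dotProduct_mulVec_zero_iff (embV v k))]
    exact (Finset.sum_eq_zero_iff_of_nonneg (fun k _ => hσ.dotProduct_mulVec_nonneg _)).mp h0 k (Finset.mem_univ k)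
  have hρq : ∀ k : b, ρ *ᵥ (embV v k) = 0 := fun k => h _ (hq k)
  funext i
  have : (ptraceB ρ *ᵥ v) i = ∑ k : b, (ρ *ᵥ (embV v k)) (i, k) := by
    simp only [mulVec_embV]
    simp only [Matrix.mulVec, dotProduct, ptraceB, Matrix.of_apply, Finset.sum_mul]
    exact Finset.sum_comm
  rw [this]
  simp only [hρq, Pi.zero_apply, Finset.sum_const_zero]

lemma star_kron (X : Matrix a a ℂ) :
    star (X ⊗ₖ (1 : Matrix b b ℂ)) = star X ⊗ₖ (1 : Matrix b b ℂ) := by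
  ext ⟨i,k⟩ ⟨j,l⟩
  simp only [Matrix.conjTranspose_apply, Matrix.kroneckerMap_apply, Matrix.star_apply,
    Matrix.one_apply, star_mul', apply_ite (star : ℂ → ℂ), star_one, star_zero]
  by_cases hkl : l = k <;> by_cases hlk : k = l <;> simp_all

lemma trace_kron_mul (W : Matrix a a ℂ) :
    ((W ⊗ₖ (1 : Matrix b b ℂ)) * ρ).trace = (W * ptraceB ρ).trace := by
  simp only [Matrix.trace, Matrix.diag_apply, Matrix.mul_apply, Matrix.kroneckerMap_apply,
    Matrix.one_apply, ptraceB, Matrix.of_apply, Fintype.sum_prod_type, mul_ite, mul_zero,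
    ite_mul, zero_mul, Finset.sum_ite_eq, Finset.sum_ite_eq', Finset.mem_univ, if_true,
    Finset.mul_sum, mul_one]
  apply Finset.sum_congr rfl; intro i _
  exact Finset.sum_comm

lemma qF_kron (s : ℝ) (X : Matrix a a ℂ) :
    qF s ρ σ (X ⊗ₖ (1 : Matrix b b ℂ)) = qF s (ptraceB ρ) (ptraceB σ) X := by
  unfold qF
  have t1 : (star (X ⊗ₖ (1 : Matrix b b ℂ)) * ρ).trace = (star X * ptraceB ρ).trace := by
    rw [star_kron, trace_kron_mul]
  have t2 : (star (X ⊗ₖ (1 : Matrix b b ℂ)) * σ * (X ⊗ₖ (1 : Matrix b b ℂ))).trace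
      = (star X * ptraceB σ * X).trace := by
    rw [star_kron, Matrix.trace_mul_cycle, ← Matrix.mul_kronecker_mul, Matrix.one_mul,
      trace_kron_mul, Matrix.trace_mul_cycle (star X) (ptraceB σ) X, Matrix.mul_assoc]
  have t3 : (star (X ⊗ₖ (1 : Matrix b b ℂ)) * (X ⊗ₖ (1 : Matrix b b ℂ)) * ρ).trace
      = (star X * X * ptraceB ρ).trace := by
    rw [star_kron, ← Matrix.mul_kronecker_mul, Matrix.one_mul, trace_kron_mul]
  rw [t1, t2, t3]
end ptrace

lemma re_star_self_mul (z : ℂ) (r : ℝ) : (star z * z * (r:ℂ)).re = ‖z‖^2 * r := by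
  have h : star z * z = ((‖z‖^2 : ℝ) : ℂ) := by
    rw [Complex.star_def, mul_comm, Complex.mul_conj, Complex.normSq_eq_norm_sq]
  rw [h, ← Complex.ofReal_mul, Complex.ofReal_re]

lemma star_self_eq (c : ℂ) : star c * c = ((‖c‖^2 : ℝ) : ℂ) := by
  rw [Complex.star_def, mul_comm, Complex.mul_conj, Complex.normSq_eq_norm_sq]

/-- completing the square: the per-entry upper bound. -/
lemma scalar_bound (μ ν s : ℝ) (hμ : 0 ≤ μ) (hν : 0 ≤ ν) (hs : 0 < s) (z c : ℂ) :
    2 * (star z * c * (ν:ℂ)).re - (μ + s * ν) * ‖z‖^2 ≤ ν^2 * ‖c‖^2 / (μ + s * ν) := by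
  rcases eq_or_lt_of_le (by positivity : (0:ℝ) ≤ μ + s * ν) with hd | hd
  · have hν0 : ν = 0 := by nlinarith
    have hμ0 : μ = 0 := by nlinarith
    simp [hν0, hμ0]
  · have hre : (star z * c * (ν:ℂ)).re ≤ ‖z‖ * ‖c‖ * ν := by
      calc (star z * c * (ν:ℂ)).re ≤ ‖star z * c * (ν:ℂ)‖ := Complex.re_le_norm _
        _ = ‖z‖ * ‖c‖ * ν := by
            rw [norm_mul, norm_mul, norm_star, Complex.norm_real, Real.norm_eq_abs,
              abs_of_nonneg hν]
    rw [le_div_iff₀ hd]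
    nlinarith [sq_nonneg ((μ + s * ν) * ‖z‖ - ν * ‖c‖),
      mul_le_mul_of_nonneg_right hre (le_of_lt hd), norm_nonneg z, norm_nonneg c]

/-- the optimal choice attains the bound. -/
lemma scalar_attain (μ ν s : ℝ) (hμ : 0 ≤ μ) (hν : 0 ≤ ν) (hs : 0 < s) (c : ℂ) :
    2 * (star (((ν / (μ + s * ν) : ℝ) : ℂ) * c) * c * (ν:ℂ)).re
      - (μ + s * ν) * ‖(((ν / (μ + s * ν) : ℝ) : ℂ) * c)‖^2 = ν^2 * ‖c‖^2 / (μ + s * ν) := by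
  by_cases hd : μ + s * ν = 0
  · have hν0 : ν = 0 := by nlinarith
    simp [hν0, hd]
  · have hd' : 0 < μ + s * ν := lt_of_le_of_ne (by positivity) (Ne.symm hd)
    have h1 : star (((ν / (μ + s * ν) : ℝ) : ℂ) * c) * c * (ν:ℂ)
        = ((ν / (μ + s * ν) * ‖c‖^2 * ν : ℝ) : ℂ) := by
      simp only [star_mul', Complex.star_def, Complex.conj_ofReal, mul_assoc]
      rw [← mul_assoc ((starRingEnd ℂ) c) c, ← Complex.star_def, star_self_eq]
      push_cast
      ring
    have h2 : ‖(((ν / (μ + s * ν) : ℝ) : ℂ) * c)‖^2 = (ν/(μ+s*ν))^2 * ‖c‖^2 := by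
      rw [norm_mul, mul_pow, Complex.norm_real, Real.norm_eq_abs, sq_abs]
    rw [h1, h2, Complex.ofReal_re]
    field_simp
    ring

lemma star_self_eq' (c : ℂ) : star c * c = ((‖c‖^2 : ℝ) : ℂ) := by
  rw [Complex.star_def, mul_comm, Complex.mul_conj, Complex.normSq_eq_norm_sq]

section spectral
variable {n : Type*} [Fintype n] [DecidableEq n]

noncomputable def Uem {M : Matrix n n ℂ} (h : M.PosSemidef) : Matrix n n ℂ :=
  h.1.eigenvectorUnitary

noncomputable def evl {M : Matrix n n ℂ} (h : M.PosSemidef) : n → ℝ := h.1.eigenvalues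

noncomputable def Cov {ρ σ : Matrix n n ℂ} (hσ : σ.PosSemidef) (hρ : ρ.PosSemidef) :
    Matrix n n ℂ := star (Uem hσ) * Uem hρ

noncomputable def Phi {ρ σ : Matrix n n ℂ} (hσ : σ.PosSemidef) (hρ : ρ.PosSemidef) (s : ℝ) :
    ℝ := ∑ k, ∑ l, (evl hρ l)^2 * ‖Cov hσ hρ k l‖^2 / (evl hσ k + s * evl hρ l)

variable {ρ σ : Matrix n n ℂ} (hρ : ρ.PosSemidef) (hσ : σ.PosSemidef)

lemma Uem_star_mul : star (Uem hρ) * Uem hρ = 1 :=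
  Unitary.coe_star_mul_self hρ.1.eigenvectorUnitary

lemma Uem_mul_star : Uem hρ * star (Uem hρ) = 1 :=
  Unitary.coe_mul_star_self hρ.1.eigenvectorUnitary

lemma spec : ρ = Uem hρ * diagonal (fun k => ((evl hρ k : ℝ) : ℂ)) * star (Uem hρ) := by
  conv_lhs => rw [hρ.1.spectral_theorem]
  rfl

lemma matLog_spec : matLog ρ
    = Uem hρ * diagonal (fun k => ((Real.log (evl hρ k) : ℝ) : ℂ)) * star (Uem hρ) := by
  rw [matLog, hρ.1.cfc_eq, Matrix.IsHermitian.cfc]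
  rfl

lemma evl_nonneg (k : n) : 0 ≤ evl hρ k := hρ.eigenvalues_nonneg k

lemma Cov_star_mul : star (Cov hσ hρ) * Cov hσ hρ = 1 := by
  have h1 := Uem_mul_star hσ
  have h2 := Uem_star_mul hρ
  calc star (Cov hσ hρ) * Cov hσ hρ
      = star (Uem hρ) * (Uem hσ * star (Uem hσ)) * Uem hρ := by
        simp only [Cov, Matrix.star_mul, star_star, Matrix.mul_assoc]
    _ = 1 := by rw [h1, Matrix.mul_one, h2]

lemma col_sum (l : n) : ∑ k, ‖Cov hσ hρ k l‖^2 = 1 := by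
  have h := congr_fun (congr_fun (Cov_star_mul hρ hσ) l) l
  rw [Matrix.mul_apply, Matrix.one_apply_eq] at h
  have h2 : ((∑ k, ‖Cov hσ hρ k l‖^2 : ℝ) : ℂ) = 1 := by
    rw [Complex.ofReal_sum, ← h]
    refine Finset.sum_congr rfl fun k _ => ?_
    rw [Matrix.star_apply, star_self_eq']
  exact_mod_cast h2

lemma trace_evl : ρ.trace = ((∑ l, evl hρ l : ℝ) : ℂ) := by
  conv_lhs => rw [spec hρ]
  rw [Matrix.trace_mul_cycle, Uem_star_mul, Matrix.one_mul, Matrix.trace_diagonal]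
  push_cast
  rfl

lemma sum_evl (htr : ρ.trace = 1) : ∑ l, evl hρ l = 1 := by
  have := (trace_evl hρ).symm.trans htr
  exact_mod_cast this

/-- total weight is one. -/
lemma sum_w (htr : ρ.trace = 1) : ∑ k, ∑ l, evl hρ l * ‖Cov hσ hρ k l‖^2 = 1 := by
  rw [Finset.sum_comm]
  calc ∑ l, ∑ k, evl hρ l * ‖Cov hσ hρ k l‖^2
      = ∑ l, evl hρ l * ∑ k, ‖Cov hσ hρ k l‖^2 := by
        exact Finset.sum_congr rfl fun l _ => (Finset.mul_sum _ _ _).symm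
    _ = ∑ l, evl hρ l := by
        refine Finset.sum_congr rfl fun l _ => by rw [col_sum hρ hσ, mul_one]
    _ = 1 := sum_evl hρ htr

/-- support condition kills the weights with `μ k = 0`. -/
lemma supp_w (hsupp : suppLE ρ σ) {k : n} (hk : evl hσ k = 0) (l : n) :
    evl hρ l * ‖Cov hσ hρ k l‖^2 = 0 := by
  have husv : σ *ᵥ (fun i => Uem hσ i k) = 0 := by
    have h := hσ.1.mulVec_eigenvectorBasis k
    have he : (fun i => Uem hσ i k) = ⇑(hσ.1.eigenvectorBasis k) := by
      funext i; exact hσ.1.eigenvectorUnitary_apply i k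
    rw [he, h]
    have : hσ.1.eigenvalues k = 0 := hk
    rw [this, zero_smul]
  have hρv : ρ *ᵥ (fun i => Uem hσ i k) = 0 := hsupp _ husv
  -- extract component l of `star V *ᵥ (ρ *ᵥ u) = 0`
  have h2 : (star (Uem hρ) * ρ) *ᵥ (fun i => Uem hσ i k) = 0 := by
    rw [← Matrix.mulVec_mulVec, hρv, Matrix.mulVec_zero]
  have h3 : star (Uem hρ) * ρ = diagonal (fun k => ((evl hρ k : ℝ) : ℂ)) * star (Uem hρ) := by
    have e := congrArg (fun M => star (Uem hρ) * M) (spec hρ)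
    rw [e, ← Matrix.mul_assoc, ← Matrix.mul_assoc, Uem_star_mul, Matrix.one_mul]
  have h2' : ((diagonal (fun k => ((evl hρ k : ℝ) : ℂ)) * star (Uem hρ))
      *ᵥ (fun i => Uem hσ i k)) = 0 := by
    simpa only [h3] using h2
  have h5 : ((evl hρ l : ℝ) : ℂ) * (star (Uem hρ) *ᵥ (fun i => Uem hσ i k)) l = 0 := by
    rw [← Matrix.mulVec_diagonal (fun k => ((evl hρ k : ℝ) : ℂ))
      (star (Uem hρ) *ᵥ (fun i => Uem hσ i k)) l, Matrix.mulVec_mulVec, h2']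
    rfl
  have h6 : (star (Uem hρ) *ᵥ (fun i => Uem hσ i k)) l = star (Cov hσ hρ k l) := by
    simp only [Matrix.mulVec, dotProduct, Cov, Matrix.mul_apply, Matrix.star_apply,
      Matrix.conjTranspose_apply, star_sum, star_mul', star_star]
    exact Finset.sum_congr rfl fun j _ => by ring
  rw [h6] at h5
  rcases mul_eq_zero.mp h5 with h | h
  · have h0 : evl hρ l = 0 := by exact_mod_cast h
    rw [h0, zero_mul]
  · have h0 : Cov hσ hρ k l = 0 := star_eq_zero.mp h
    rw [h0]
    simp

lemma re_sum2 {f : n → n → ℂ} : (∑ k, ∑ l, f k l).re = ∑ k, ∑ l, (f k l).re := by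
  rw [Complex.re_sum]
  exact Finset.sum_congr rfl fun k _ => Complex.re_sum _ _

/-- the quadratic functional in coordinates (abstract version). -/
lemma qF_eq_sum_gen (U V : Matrix n n ℂ) (hU : star U * U = 1) (hV : star V * V = 1)
    (μr νr : n → ℝ) (s : ℝ) (Z : Matrix n n ℂ) :
    qF s (V * diagonal (fun l => ((νr l : ℝ) : ℂ)) * star V)
      (U * diagonal (fun k => ((μr k : ℝ) : ℂ)) * star U) (U * Z * star V)
      = ∑ k, ∑ l, (2 * (star (Z k l) * (star U * V) k l * ((νr l : ℝ) : ℂ)).re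
          - (μr k + s * νr l) * ‖Z k l‖^2) := by
  unfold qF
  rw [key1 U V Z hV, key2 U V Z hU hV, key3 U V Z hU hV]
  rw [re_sum2, re_sum2, re_sum2]
  simp only [re_star_self_mul, Finset.mul_sum, ← Finset.sum_sub_distrib]
  refine Finset.sum_congr rfl fun k _ => ?_
  refine Finset.sum_congr rfl fun l _ => ?_
  ring

lemma qF_eq_sum (s : ℝ) (Z : Matrix n n ℂ) :
    qF s ρ σ (Uem hσ * Z * star (Uem hρ))
      = ∑ k, ∑ l, (2 * (star (Z k l) * Cov hσ hρ k l * ((evl hρ l : ℝ) : ℂ)).re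
          - (evl hσ k + s * evl hρ l) * ‖Z k l‖^2) := by
  have h := qF_eq_sum_gen (Uem hσ) (Uem hρ) (Uem_star_mul hσ) (Uem_star_mul hρ)
    (evl hσ) (evl hρ) s Z
  rw [← spec hρ, ← spec hσ] at h
  exact h

lemma qF_le_Phi {s : ℝ} (hs : 0 < s) (Y : Matrix n n ℂ) : qF s ρ σ Y ≤ Phi hσ hρ s := by
  have hY : Uem hσ * (star (Uem hσ) * Y * Uem hρ) * star (Uem hρ) = Y :=
    sandwich_eq (Uem_mul_star hσ) (Uem_mul_star hρ) Y
  calc qF s ρ σ Y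
      = qF s ρ σ (Uem hσ * (star (Uem hσ) * Y * Uem hρ) * star (Uem hρ)) := by rw [hY]
    _ = ∑ k, ∑ l, (2 * (star ((star (Uem hσ) * Y * Uem hρ) k l) * Cov hσ hρ k l
          * ((evl hρ l : ℝ) : ℂ)).re
          - (evl hσ k + s * evl hρ l) * ‖(star (Uem hσ) * Y * Uem hρ) k l‖^2) :=
        qF_eq_sum hρ hσ s _
    _ ≤ Phi hσ hρ s := by
        refine Finset.sum_le_sum fun k _ => Finset.sum_le_sum fun l _ => ?_
        exact scalar_bound _ _ _ (evl_nonneg hσ k) (evl_nonneg hρ l) hs _ _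

lemma Phi_attain {s : ℝ} (hs : 0 < s) :
    qF s ρ σ (Uem hσ * (Matrix.of fun k l =>
        ((evl hρ l / (evl hσ k + s * evl hρ l) : ℝ) : ℂ) * Cov hσ hρ k l) * star (Uem hρ))
      = Phi hσ hρ s := by
  rw [qF_eq_sum]
  refine Finset.sum_congr rfl fun k _ => Finset.sum_congr rfl fun l _ => ?_
  simp only [Matrix.of_apply]
  exact scalar_attain _ _ _ (evl_nonneg hσ k) (evl_nonneg hρ l) hs _

/-- trace of a product of two matrices diagonal in the same basis. -/
lemma trace_same_basis (V : Matrix n n ℂ) (hV : star V * V = 1) (d e : n → ℝ) :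
    ((V * diagonal (fun l => ((d l : ℝ) : ℂ)) * star V)
      * (V * diagonal (fun l => ((e l : ℝ) : ℂ)) * star V)).trace
      = ((∑ l, d l * e l : ℝ) : ℂ) := by
  have h1 : (V * diagonal (fun l => ((d l : ℝ) : ℂ)) * star V)
      * (V * diagonal (fun l => ((e l : ℝ) : ℂ)) * star V)
      = V * (diagonal (fun l => ((d l : ℝ) : ℂ))
          * (diagonal (fun l => ((e l : ℝ) : ℂ)) * star V)) := by
    simp only [Matrix.mul_assoc, cancel_left hV]
  rw [h1, Matrix.trace_mul_comm]
  have h2 : diagonal (fun l => ((d l : ℝ) : ℂ)) * (diagonal (fun l => ((e l : ℝ) : ℂ)) * star V) * V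
      = diagonal (fun l => ((d l : ℝ) : ℂ)) * diagonal (fun l => ((e l : ℝ) : ℂ)) := by
    simp only [Matrix.mul_assoc, hV, Matrix.mul_one]
  rw [h2, Matrix.diagonal_mul_diagonal, Matrix.trace_diagonal]
  push_cast
  rfl

/-- trace of a product of two matrices diagonal in different bases. -/
lemma trace_two_bases (U V : Matrix n n ℂ) (hV : star V * V = 1) (d e : n → ℝ) :
    ((V * diagonal (fun l => ((d l : ℝ) : ℂ)) * star V)
      * (U * diagonal (fun k => ((e k : ℝ) : ℂ)) * star U)).trace
      = ((∑ k, ∑ l, (d l * ‖(star U * V) k l‖^2) * e k : ℝ) : ℂ) := by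
  have e4 := traceE4 (star V * U) (fun l => ((d l : ℝ) : ℂ)) (fun k => ((e k : ℝ) : ℂ))
  rw [show star (star V * U) = star U * V by
    simp only [Matrix.star_mul, star_star]] at e4
  have h1 : (V * diagonal (fun l => ((d l : ℝ) : ℂ)) * star V)
      * (U * diagonal (fun k => ((e k : ℝ) : ℂ)) * star U)
      = V * (diagonal (fun l => ((d l : ℝ) : ℂ)) * star V
          * (U * (diagonal (fun k => ((e k : ℝ) : ℂ)) * star U))) := by
    simp only [Matrix.mul_assoc]
  rw [h1, Matrix.trace_mul_comm]
  have h2 : diagonal (fun l => ((d l : ℝ) : ℂ)) * star V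
      * (U * (diagonal (fun k => ((e k : ℝ) : ℂ)) * star U)) * V
      = diagonal (fun l => ((d l : ℝ) : ℂ)) * (star V * U)
        * diagonal (fun k => ((e k : ℝ) : ℂ)) * (star U * V) := by
    simp only [Matrix.mul_assoc]
  rw [h2, e4]
  have h3 : ∀ (l k : n), (star V * U) l k = star ((star U * V) k l) := by
    intro l k
    rw [show star V * U = star (star U * V) by simp only [Matrix.star_mul, star_star],
      Matrix.star_apply]
  have hterm : ∀ l k : n, ((star V * U) l k * star ((star V * U) l k))
      = ((‖(star U * V) k l‖^2 : ℝ) : ℂ) := by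
    intro l k
    rw [h3 l k, star_star, star_self_eq']
  simp only [hterm]
  push_cast
  rw [Finset.sum_comm]
  refine Finset.sum_congr rfl fun k _ => Finset.sum_congr rfl fun l _ => ?_
  ring

lemma relEnt_eq_sum (htrρ : ρ.trace = 1) (htrσ : σ.trace = 1) :
    relEnt ρ σ = ∑ k, ∑ l, (evl hρ l * ‖Cov hσ hρ k l‖^2)
      * (Real.log (evl hρ l) - Real.log (evl hσ k)) := by
  have p1 : (ρ * matLog ρ).trace
      = ((∑ l, evl hρ l * Real.log (evl hρ l) : ℝ) : ℂ) := by
    have e := congrArg₂ (fun A B : Matrix n n ℂ => (A * B).trace) (spec hρ) (matLog_spec hρ)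
    rw [e, trace_same_basis (Uem hρ) (Uem_star_mul hρ)]
  have p2 : (ρ * matLog σ).trace
      = ((∑ k, ∑ l, (evl hρ l * ‖Cov hσ hρ k l‖^2) * Real.log (evl hσ k) : ℝ) : ℂ) := by
    have e := congrArg₂ (fun A B : Matrix n n ℂ => (A * B).trace) (spec hρ) (matLog_spec hσ)
    rw [e, trace_two_bases (Uem hσ) (Uem hρ) (Uem_star_mul hρ)]
    rfl
  rw [relEnt, Matrix.mul_sub, Matrix.trace_sub, p1, p2, htrρ, htrσ]
  rw [show (((∑ l, evl hρ l * Real.log (evl hρ l) : ℝ) : ℂ)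
      - ((∑ k, ∑ l, (evl hρ l * ‖Cov hσ hρ k l‖^2) * Real.log (evl hσ k) : ℝ) : ℂ) + 1 - 1)
      = (((∑ l, evl hρ l * Real.log (evl hρ l))
        - (∑ k, ∑ l, (evl hρ l * ‖Cov hσ hρ k l‖^2) * Real.log (evl hσ k)) : ℝ) : ℂ) by
    push_cast; ring]
  rw [Complex.ofReal_re]
  have hA : (∑ l, evl hρ l * Real.log (evl hρ l))
      = ∑ k, ∑ l, (evl hρ l * ‖Cov hσ hρ k l‖^2) * Real.log (evl hρ l) := by
    rw [Finset.sum_comm]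
    refine Finset.sum_congr rfl fun l _ => ?_
    rw [show (∑ k, (evl hρ l * ‖Cov hσ hρ k l‖^2) * Real.log (evl hρ l))
        = (evl hρ l * ∑ k, ‖Cov hσ hρ k l‖^2) * Real.log (evl hρ l) by
      rw [Finset.mul_sum, Finset.sum_mul]]
    rw [col_sum hρ hσ, mul_one]
  rw [hA, ← Finset.sum_sub_distrib]
  refine Finset.sum_congr rfl fun k _ => ?_
  rw [← Finset.sum_sub_distrib]
  refine Finset.sum_congr rfl fun l _ => ?_
  ring

open MeasureTheory Set in
lemma relEnt_rep (hsupp : suppLE ρ σ) (htrρ : ρ.trace = 1) (htrσ : σ.trace = 1) :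
    IntegrableOn (fun s => Phi hσ hρ s - 1/(1+s)) (Ioi (0:ℝ)) ∧
    relEnt ρ σ = ∫ s in Ioi (0:ℝ), (Phi hσ hρ s - 1/(1+s)) := by
  classical
  set F : n × n → ℝ → ℝ := fun p s => (evl hρ p.2 * ‖Cov hσ hρ p.1 p.2‖^2)
    * (evl hρ p.2 / (evl hσ p.1 + s * evl hρ p.2) - 1/(1+s)) with hF
  have hw0 : ∀ p : n × n, evl hρ p.2 * ‖Cov hσ hρ p.1 p.2‖^2 = 0
      ∨ (0 < evl hρ p.2 ∧ 0 < evl hσ p.1) := by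
    intro p
    by_cases h : evl hρ p.2 * ‖Cov hσ hρ p.1 p.2‖^2 = 0
    · exact Or.inl h
    · right
      constructor
      · rcases (evl_nonneg hρ p.2).lt_or_eq with h' | h'
        · exact h'
        · exact absurd (by rw [← h', zero_mul]) h
      · rcases (evl_nonneg hσ p.1).lt_or_eq with h' | h'
        · exact h'
        · exact absurd (supp_w hρ hσ hsupp h'.symm p.2) h
  have hFzero : ∀ p : n × n, evl hρ p.2 * ‖Cov hσ hρ p.1 p.2‖^2 = 0 → F p = fun _ => 0 := by
    intro p h; funext s; rw [hF]; simp only; rw [h, zero_mul]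
  have hFint : ∀ p : n × n, IntegrableOn (F p) (Ioi (0:ℝ)) := by
    intro p
    rcases hw0 p with h | ⟨h1, h2⟩
    · rw [hFzero p h]; exact integrableOn_zero
    · exact (scalar_integrable _ _ h2 h1).const_mul _
  have hFval : ∀ p : n × n, (∫ s in Ioi (0:ℝ), F p s)
      = (evl hρ p.2 * ‖Cov hσ hρ p.1 p.2‖^2)
        * (Real.log (evl hρ p.2) - Real.log (evl hσ p.1)) := by
    intro p
    rcases hw0 p with h | ⟨h1, h2⟩
    · rw [hFzero p h]
      simp only [MeasureTheory.integral_zero]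
      rw [h, zero_mul]
    · rw [hF]; simp only
      rw [MeasureTheory.integral_const_mul, scalar_integral _ _ h2 h1]
  have hsum : (fun s => Phi hσ hρ s - 1/(1+s)) = fun s => ∑ p : n × n, F p s := by
    funext s
    rw [Fintype.sum_prod_type]
    have e1 : ∀ k l : n, F (k,l) s
        = (evl hρ l)^2 * ‖Cov hσ hρ k l‖^2 / (evl hσ k + s * evl hρ l)
          - (evl hρ l * ‖Cov hσ hρ k l‖^2) * (1/(1+s)) := by
      intro k l
      rw [hF]; simp only
      rw [mul_sub]
      congr 1
      rw [mul_div_assoc']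
      congr 1
      ring
    simp only [e1]
    rw [Finset.sum_congr rfl fun k (_ : k ∈ Finset.univ) => Finset.sum_sub_distrib _ _,
      Finset.sum_sub_distrib]
    congr 1
    rw [show (∑ k, ∑ l, (evl hρ l * ‖Cov hσ hρ k l‖^2) * (1/(1+s)))
        = (∑ k, ∑ l, evl hρ l * ‖Cov hσ hρ k l‖^2) * (1/(1+s)) by
      rw [Finset.sum_mul]
      exact Finset.sum_congr rfl fun k _ => (Finset.sum_mul _ _ _).symm]
    rw [sum_w hρ hσ htrρ, one_mul]
  constructor
  · rw [hsum]; exact integrable_finset_sum _ (fun p _ => hFint p)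
  · rw [hsum, MeasureTheory.integral_finset_sum _ (fun p _ => hFint p)]
    rw [relEnt_eq_sum hρ hσ htrρ htrσ, Fintype.sum_prod_type]
    exact (Finset.sum_congr rfl fun k _ => Finset.sum_congr rfl fun l _ => hFval (k,l)).symm

end spectral

/-- Monotonicity of the quantum relative entropy under the partial trace: for density
matrices `ρ, σ` on `H_A ⊗ H_B`, `D(Tr_B ρ ‖ Tr_B σ) ≤ D(ρ ‖ σ)`. -/
theorem relEntE_ptraceB_le {a b : Type*} [Fintype a] [DecidableEq a]
    [Fintype b] [DecidableEq b]
    (ρ σ : Matrix (a × b) (a × b) ℂ)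
    (hρ : ρ.PosSemidef) (hρtr : ρ.trace = 1)
    (hσ : σ.PosSemidef) (hσtr : σ.trace = 1) :
    relEntE (ptraceB ρ) (ptraceB σ) ≤ relEntE ρ σ := by
  classical
  by_cases hsupp : suppLE ρ σ
  · have hρA : (ptraceB ρ).PosSemidef := posSemidef_ptraceB ρ hρ
    have hσA : (ptraceB σ).PosSemidef := posSemidef_ptraceB σ hσ
    have hsuppA : suppLE (ptraceB ρ) (ptraceB σ) := suppLE_ptraceB ρ σ hσ hsupp
    have htrρA : (ptraceB ρ).trace = 1 := by rw [ptraceB_trace, hρtr]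
    have htrσA : (ptraceB σ).trace = 1 := by rw [ptraceB_trace, hσtr]
    simp only [relEntE]
    rw [if_pos hsuppA, if_pos hsupp, EReal.coe_le_coe_iff]
    obtain ⟨hint, hval⟩ := relEnt_rep hρ hσ hsupp hρtr hσtr
    obtain ⟨hintA, hvalA⟩ := relEnt_rep hρA hσA hsuppA htrρA htrσA
    rw [hval, hvalA]
    refine MeasureTheory.setIntegral_mono_on hintA hint measurableSet_Ioi fun s hs => ?_
    have hs' : (0:ℝ) < s := hs
    have key : Phi hσA hρA s ≤ Phi hσ hρ s := by
      rw [← Phi_attain hρA hσA hs', ← qF_kron ρ σ s _]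
      exact qF_le_Phi hρ hσ hs' _
    linarith
  · simp only [relEntE]
    rw [if_neg hsupp]
    exact le_top
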